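/- For every λ ∈ ℝ, let μ_λ be the Lie bracket on ℝ^7 with nonzero basis brackets [e1,e2]=e4, [e1,e3]=e5, [e1,e4]=e6, [e1,e6]=e7, [e2,e3]=e6, [e2,e5]=λe7, [e3,e4]=(λ-1)e7. Then μ_λ satisfies the Jacobi identity, φ = (2/19)·diag(3,5,6,8,9,11,14) is a derivation of (ℝ^7,μ_λ), and φ is pre-Einstein, i.e. trace(φ∘ψ) = trace(ψ) for every derivation ψ of (ℝ^7,μ_λ). -/
import Mathlib


open Finset

noncomputable section

/-- `ℝ⁷` with its standard basis and standard inner product. -/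
abbrev V7 : Type := Fin 7 → ℝ

/-- The standard basis vector `e i`. -/
def e (i : Fin 7) : V7 := Pi.single i 1

/-- The standard inner product on `ℝ⁷`. -/
def dot (x y : V7) : ℝ := ∑ i, x i * y i

/-- Structure constants built from a list of entries `(i, j, k, a)`, each meaning that
`μ (e i) (e j)` has component `a` along `e k` (and `μ (e j) (e i)` has component `-a`);
all unlisted basis brackets are `0`. -/
def toC (L : List (Fin 7 × Fin 7 × Fin 7 × ℝ)) (i j k : Fin 7) : ℝ :=
  (L.map fun t =>
      (if t.1 = i ∧ t.2.1 = j ∧ t.2.2.1 = k then t.2.2.2 else 0)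
    - (if t.1 = j ∧ t.2.1 = i ∧ t.2.2.1 = k then t.2.2.2 else 0)).sum

/-- The bilinear skew-symmetric map on `ℝ⁷` with structure constants `c`. -/
def br (c : Fin 7 → Fin 7 → Fin 7 → ℝ) (x y : V7) : V7 :=
  fun k => ∑ i, ∑ j, x i * y j * c i j k

lemma br_add_left (c : Fin 7 → Fin 7 → Fin 7 → ℝ) (x x' y : V7) :
    br c (x + x') y = br c x y + br c x' y := by
  funext k
  simp only [br, Pi.add_apply, ← Finset.sum_add_distrib]
  exact Finset.sum_congr rfl fun i _ => Finset.sum_congr rfl fun j _ => by ring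

lemma br_smul_left (c : Fin 7 → Fin 7 → Fin 7 → ℝ) (r : ℝ) (x y : V7) :
    br c (r • x) y = r • br c x y := by
  funext k
  simp only [br, Pi.smul_apply, smul_eq_mul, Finset.mul_sum]
  exact Finset.sum_congr rfl fun i _ => Finset.sum_congr rfl fun j _ => by ring

lemma br_add_right (c : Fin 7 → Fin 7 → Fin 7 → ℝ) (x y y' : V7) :
    br c x (y + y') = br c x y + br c x y' := by
  funext k
  simp only [br, Pi.add_apply, ← Finset.sum_add_distrib]
  exact Finset.sum_congr rfl fun i _ => Finset.sum_congr rfl fun j _ => by ring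

lemma br_smul_right (c : Fin 7 → Fin 7 → Fin 7 → ℝ) (r : ℝ) (x y : V7) :
    br c x (r • y) = r • br c x y := by
  funext k
  simp only [br, Pi.smul_apply, smul_eq_mul, Finset.mul_sum]
  exact Finset.sum_congr rfl fun i _ => Finset.sum_congr rfl fun j _ => by ring

lemma br_zero_left (c : Fin 7 → Fin 7 → Fin 7 → ℝ) (y : V7) : br c 0 y = 0 := by
  funext k; simp [br]

lemma br_zero_right (c : Fin 7 → Fin 7 → Fin 7 → ℝ) (x : V7) : br c x 0 = 0 := by
  funext k; simp [br]

/-- The space of derivations of the algebra `(ℝ⁷, br c)`, i.e. the linear maps `D` with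
`D (μ x y) = μ (D x) y + μ x (D y)` for all `x, y`, as a submodule of the endomorphisms. -/
def derivations (c : Fin 7 → Fin 7 → Fin 7 → ℝ) : Submodule ℝ (Module.End ℝ V7) where
  carrier := {D | ∀ x y, D (br c x y) = br c (D x) y + br c x (D y)}
  add_mem' := by
    intro D E hD hE x y
    simp only [LinearMap.add_apply, hD x y, hE x y, br_add_left, br_add_right]
    abel
  zero_mem' := by
    intro x y
    simp [br_zero_left, br_zero_right]
  smul_mem' := by
    intro r D hD x y
    simp only [LinearMap.smul_apply, hD x y, smul_add, br_smul_left, br_smul_right]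

/-- The Jacobi identity for the bracket `br c`. -/
def Jacobi (c : Fin 7 → Fin 7 → Fin 7 → ℝ) : Prop :=
  ∀ x y z : V7, br c (br c x y) z + br c (br c y z) x + br c (br c z x) y = 0

/-- Skew-symmetry of the bracket `br c`. -/
def Skew (c : Fin 7 → Fin 7 → Fin 7 → ℝ) : Prop :=
  ∀ x y : V7, br c x y = - br c y x

/-- The diagonal endomorphism `diag (a 1, …, a 7)` of `ℝ⁷`, `e i ↦ a i • e i`. -/
def diagL (a : Fin 7 → ℝ) : Module.End ℝ V7 :=
  LinearMap.pi fun i => a i • LinearMap.proj i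

/-- Structure constants of the bracket `μ_λ` with nonzero basis brackets
`[e1,e2]=e4, [e1,e3]=e5, [e1,e4]=e6, [e1,e6]=e7, [e2,e3]=e6, [e2,e5]=λe7,
[e3,e4]=(λ-1)e7`. -/
def c8 (lam : ℝ) : Fin 7 → Fin 7 → Fin 7 → ℝ :=
  toC [(0, 1, 3, (1:ℝ)),
   (0, 2, 4, 1),
   (0, 3, 5, 1),
   (0, 5, 6, 1),
   (1, 2, 5, 1),
   (1, 4, 6, lam),
   (2, 3, 6, lam - 1)]

lemma toC_skew (L : List (Fin 7 × Fin 7 × Fin 7 × ℝ)) (i j k : Fin 7) :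
    toC L j i k = - toC L i j k := by
  unfold toC
  induction L with
  | nil => simp
  | cons t L ih => simp only [List.map_cons, List.sum_cons, ih]; ring

section vec7
variable {α : Type*} (a b c d f g h : α)
lemma vec7_0 : ![a,b,c,d,f,g,h] (0 : Fin 7) = a := rfl
lemma vec7_1 : ![a,b,c,d,f,g,h] (1 : Fin 7) = b := rfl
lemma vec7_2 : ![a,b,c,d,f,g,h] (2 : Fin 7) = c := rfl
lemma vec7_3 : ![a,b,c,d,f,g,h] (3 : Fin 7) = d := rfl
lemma vec7_4 : ![a,b,c,d,f,g,h] (4 : Fin 7) = f := rfl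
lemma vec7_5 : ![a,b,c,d,f,g,h] (5 : Fin 7) = g := rfl
lemma vec7_6 : ![a,b,c,d,f,g,h] (6 : Fin 7) = h := rfl
end vec7

lemma br_c8 (lam : ℝ) (x y : V7) :
    br (c8 lam) x y =
      ![0, 0, 0, x 0 * y 1 - x 1 * y 0, x 0 * y 2 - x 2 * y 0,
        x 0 * y 3 - x 3 * y 0 + x 1 * y 2 - x 2 * y 1,
        x 0 * y 5 - x 5 * y 0 + lam * (x 1 * y 4 - x 4 * y 1)
          + (lam - 1) * (x 2 * y 3 - x 3 * y 2)] := by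
  funext k
  fin_cases k <;>
    · simp +decide [br, c8, toC, Fin.sum_univ_seven,
        vec7_0, vec7_1, vec7_2, vec7_3, vec7_4, vec7_5, vec7_6]
      try ring


lemma hphi (z : V7) :
    ((2/19 : ℝ) • diagL ![3, 5, 6, 8, 9, 11, 14]) z =
      ![6/19 * z 0, 10/19 * z 1, 12/19 * z 2, 16/19 * z 3,
        18/19 * z 4, 22/19 * z 5, 28/19 * z 6] := by
  funext i
  fin_cases i <;>
    · simp [diagL, vec7_0, vec7_1, vec7_2, vec7_3, vec7_4, vec7_5, vec7_6]
      try ring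

lemma htr (χ : Module.End ℝ V7) :
    LinearMap.trace ℝ V7 χ = ∑ i, χ (e i) i := by
  rw [LinearMap.trace_eq_matrix_trace ℝ (Pi.basisFun ℝ (Fin 7))]
  simp [Matrix.trace, Matrix.diag, LinearMap.toMatrix_apply, e]


/-- The bracket satisfies the Jacobi identity (and is skew-symmetric), `φ` is a derivation
of it, and `φ` is pre-Einstein: `trace (φ ∘ ψ) = trace ψ` for every derivation `ψ`. -/
theorem stmt (lam : ℝ) :
    Skew (c8 lam) ∧ Jacobi (c8 lam) ∧
    ((2/19 : ℝ) • diagL ![3, 5, 6, 8, 9, 11, 14]) ∈ derivations (c8 lam) ∧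
    ∀ ψ ∈ derivations (c8 lam),
      LinearMap.trace ℝ V7 (((2/19 : ℝ) • diagL ![3, 5, 6, 8, 9, 11, 14]) ∘ₗ ψ) = LinearMap.trace ℝ V7 ψ := by
  refine ⟨?_, ?_, ?_, ?_⟩
  · intro x y
    funext k
    fin_cases k <;>
      · simp [br_c8, vec7_0, vec7_1, vec7_2, vec7_3, vec7_4, vec7_5, vec7_6]
        try ring
  · intro x y z
    funext k
    simp only [br_c8]
    fin_cases k <;>
      · simp [vec7_0, vec7_1, vec7_2, vec7_3, vec7_4, vec7_5, vec7_6]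
        try ring
  · intro x y
    funext k
    simp only [hphi, br_c8]
    fin_cases k <;>
      · simp [vec7_0, vec7_1, vec7_2, vec7_3, vec7_4, vec7_5, vec7_6]
        try ring
  · intro ψ hψ
    have hd : ∀ x y, ψ (br (c8 lam) x y) = br (c8 lam) (ψ x) y + br (c8 lam) x (ψ y) := hψ
    have hb : ∀ (a b k : Fin 7), br (c8 lam) (e a) (e b) = e k →
        ψ (e k) = br (c8 lam) (ψ (e a)) (e b) + br (c8 lam) (e a) (ψ (e b)) := by
      intro a b k h
      rw [← h]; exact hd (e a) (e b)
    have hbr : ∀ (a b : Fin 7) (k : Fin 7), br (c8 lam) (e a) (e b) = e k → True := fun _ _ _ _ => trivial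
    have h01 := congrFun (hb 0 1 3 (by
      rw [br_c8]; funext i; fin_cases i <;> simp [e, Pi.single_apply, vec7_0, vec7_1, vec7_2, vec7_3, vec7_4, vec7_5, vec7_6])) 3
    have h02 := congrFun (hb 0 2 4 (by
      rw [br_c8]; funext i; fin_cases i <;> simp [e, Pi.single_apply, vec7_0, vec7_1, vec7_2, vec7_3, vec7_4, vec7_5, vec7_6])) 4
    have h03 := congrFun (hb 0 3 5 (by
      rw [br_c8]; funext i; fin_cases i <;> simp [e, Pi.single_apply, vec7_0, vec7_1, vec7_2, vec7_3, vec7_4, vec7_5, vec7_6])) 5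
    have h12 := congrFun (hb 1 2 5 (by
      rw [br_c8]; funext i; fin_cases i <;> simp [e, Pi.single_apply, vec7_0, vec7_1, vec7_2, vec7_3, vec7_4, vec7_5, vec7_6])) 5
    have h05 := congrFun (hb 0 5 6 (by
      rw [br_c8]; funext i; fin_cases i <;> simp [e, Pi.single_apply, vec7_0, vec7_1, vec7_2, vec7_3, vec7_4, vec7_5, vec7_6])) 6
    simp [Pi.add_apply, br_c8, e, vec7_0, vec7_1, vec7_2, vec7_3, vec7_4, vec7_5, vec7_6,
      Pi.single_apply] at h01 h02 h03 h12 h05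
    rw [htr, htr]
    simp only [LinearMap.comp_apply, hphi, Fin.sum_univ_seven, e,
      vec7_0, vec7_1, vec7_2, vec7_3, vec7_4, vec7_5, vec7_6]
    linarith [h01, h02, h03, h12, h05]
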